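/- Let p ≥ 5 be a prime and let C be the cyclic code of length n = 3p over F_p with generator polynomial g(x) = (x−1)^4 (x^2 + x + 1). Then the minimum symbol-pair distance of C equals 7, so C is an AMDS (3p, 7)_p symbol-pair code. -/

import Mathlib

open Polynomial

/-- Hamming weight of a cyclic word `x : ZMod n → F`. -/
def hammingWt {F : Type*} [Zero F] [DecidableEq F] (n : ℕ) (x : ZMod n → F) : ℕ :=
  ((Finset.range n).filter fun i : ℕ => x (↑i) ≠ 0).card

/-- Symbol-pair weight of a cyclic word `x : ZMod n → F`. -/
def pairWt {F : Type*} [Zero F] [DecidableEq F] (n : ℕ) (x : ZMod n → F) : ℕ :=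
  ((Finset.range n).filter fun i : ℕ =>
    (x (↑i), x (↑i + 1)) ≠ ((0 : F), (0 : F))).card

/-- Symbol-pair distance between two words of length `n`. -/
def pairDist {F : Type*} [DecidableEq F] (n : ℕ) (x y : ZMod n → F) : ℕ :=
  ((Finset.range n).filter fun i : ℕ =>
    (x (↑i), x (↑i + 1)) ≠ (y (↑i), y (↑i + 1))).card

/-- The polynomial associated to a word. -/
noncomputable def toPoly {F : Type*} [Semiring F] (n : ℕ) (x : ZMod n → F) : F[X] :=
  ∑ i ∈ Finset.range n, Polynomial.C (x (↑i)) * X ^ i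

/-- The cyclic code of length `n` with generator polynomial `g`:
a word of length `n` is a codeword iff its associated polynomial
(of degree `< n`) is divisible by `g`. -/
def cyclicCode {F : Type*} [Field F] (n : ℕ) (g : F[X]) : Set (ZMod n → F) :=
  {c | g ∣ toPoly n c}


open Finset
section Vand
variable {F : Type*} [Field F]

lemma vand2 {x y a b : F} (hxy : x ≠ y) (h0 : a + b = 0) (h1 : a*x + b*y = 0) : a = 0 := by
  have h : a * (x - y) = 0 := by linear_combination h1 - y * h0
  rcases mul_eq_zero.mp h with h' | h'
  · exact h'
  · exact absurd (sub_eq_zero.mp h') hxy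

lemma vand3 {x y z a b e : F} (hxy : x ≠ y) (hxz : x ≠ z) (h0 : a + b + e = 0)
    (h1 : a*x + b*y + e*z = 0) (h2 : a*x^2 + b*y^2 + e*z^2 = 0) : a = 0 := by
  have h : a * ((x - y) * (x - z)) = 0 := by linear_combination h2 - (y+z)*h1 + y*z*h0
  rcases mul_eq_zero.mp h with h' | h'
  · exact h'
  · rcases mul_eq_zero.mp h' with h'' | h''
    · exact absurd (sub_eq_zero.mp h'') hxy
    · exact absurd (sub_eq_zero.mp h'') hxz

lemma vand4 {x y z t a b e f : F} (hxy : x ≠ y) (hxz : x ≠ z) (hxt : x ≠ t)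
    (h0 : a + b + e + f = 0) (h1 : a*x + b*y + e*z + f*t = 0)
    (h2 : a*x^2 + b*y^2 + e*z^2 + f*t^2 = 0)
    (h3 : a*x^3 + b*y^3 + e*z^3 + f*t^3 = 0) : a = 0 := by
  have h : a * ((x - y) * ((x - z) * (x - t))) = 0 := by
    linear_combination h3 - (y+z+t)*h2 + (y*z+y*t+z*t)*h1 - y*z*t*h0
  rcases mul_eq_zero.mp h with h' | h'
  · exact h'
  rcases mul_eq_zero.mp h' with h'' | h''
  · exact absurd (sub_eq_zero.mp h'') hxy
  rcases mul_eq_zero.mp h'' with h3' | h3'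
  · exact absurd (sub_eq_zero.mp h3') hxz
  · exact absurd (sub_eq_zero.mp h3') hxt

lemma vand3dual {t1 t2 t3 u v w : F} (h12 : t1 ≠ t2) (h13 : t1 ≠ t3) (h23 : t2 ≠ t3)
    (e1 : u + v*t1 + w*t1^2 = 0) (e2 : u + v*t2 + w*t2^2 = 0)
    (e3 : u + v*t3 + w*t3^2 = 0) : u = 0 ∧ v = 0 ∧ w = 0 := by
  have hw : w * ((t1 - t2) * ((t2 - t3) * (t1 - t3))) = 0 := by
    linear_combination (t2 - t3)*e1 - (t1 - t3)*e2 + (t1 - t2)*e3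
  have hw0 : w = 0 := by
    rcases mul_eq_zero.mp hw with h | h
    · exact h
    rcases mul_eq_zero.mp h with h | h
    · exact absurd (sub_eq_zero.mp h) h12
    rcases mul_eq_zero.mp h with h | h
    · exact absurd (sub_eq_zero.mp h) h23
    · exact absurd (sub_eq_zero.mp h) h13
  subst hw0
  have hv : v * (t1 - t2) = 0 := by linear_combination e1 - e2
  have hv0 : v = 0 := by
    rcases mul_eq_zero.mp hv with h | h
    · exact h
    · exact absurd (sub_eq_zero.mp h) h12
  subst hv0
  refine ⟨by linear_combination e1, rfl, rfl⟩

end Vand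

section Deriv
variable {F : Type*} [CommRing F]

lemma dvd_derivative_of_dvd_pow (a : F) (k : ℕ) (f : F[X])
    (h : (X - C a)^(k+1) ∣ f) : (X - C a)^k ∣ derivative f := by
  obtain ⟨q, rfl⟩ := h
  refine ⟨((k+1 : ℕ) : F[X]) * derivative (X - C a) * q + (X - C a) * derivative q, ?_⟩
  rw [derivative_mul, derivative_pow, Nat.add_sub_cancel, pow_succ]
  simp only [C_eq_natCast]
  ring

lemma theta_iter (n : ℕ) (c : ZMod n → F) (r : ℕ) :
    (fun f : F[X] => X * derivative f)^[r] (toPoly n c)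
      = ∑ i ∈ range n, C (c ↑i * ((i : ℕ) : F)^r) * X^i := by
  induction r with
  | zero => simp [toPoly]
  | succ r ih =>
    rw [Function.iterate_succ_apply', ih, derivative_sum, Finset.mul_sum]
    refine Finset.sum_congr rfl fun i _ => ?_
    rw [derivative_C_mul_X_pow]
    rcases i with _ | i
    · simp
    · rw [Nat.add_sub_cancel]
      have : (X : F[X]) * (C (c ↑(i+1) * ((i+1:ℕ):F)^r * ((i+1:ℕ):F)) * X ^ i)
          = C (c ↑(i+1) * ((i+1:ℕ):F)^r * ((i+1:ℕ):F)) * X ^ (i+1) := by ring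
      rw [this, pow_succ]
      ring_nf

lemma moments (n : ℕ) (c : ZMod n → F) (h : ((X : F[X]) - 1)^4 ∣ toPoly n c)
    (r : ℕ) (hr : r < 4) : ∑ i ∈ range n, c ↑i * ((i : ℕ) : F)^r = 0 := by
  have key : ∀ (s : ℕ) (f : F[X]), ((X : F[X]) - 1)^(s+1) ∣ f →
      ((X : F[X]) - 1) ∣ (fun f : F[X] => X * derivative f)^[s] f := by
    intro s
    induction s with
    | zero => intro f hf; simpa using hf
    | succ s ih =>
      intro f hf
      rw [Function.iterate_succ_apply]
      apply ih
      have : ((X : F[X]) - 1) = X - C 1 := by simp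
      refine Dvd.dvd.mul_left ?_ _
      rw [this] at hf ⊢
      exact dvd_derivative_of_dvd_pow 1 (s+1) f hf
  have hd : ((X : F[X]) - 1) ∣ (fun f : F[X] => X * derivative f)^[r] (toPoly n c) :=
    key r _ (dvd_trans (pow_dvd_pow _ (by omega)) h)
  obtain ⟨q, hq⟩ := hd
  rw [theta_iter] at hq
  have := congrArg (eval 1) hq
  simpa [eval_finset_sum] using this
end Deriv

lemma sum_split3 {β : Type*} [AddCommMonoid β] (s : Finset ℕ) (f : ℕ → β) :
    ∑ i ∈ s, f i = ((∑ i ∈ s.filter (fun i => i % 3 = 0), f i)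
      + ∑ i ∈ s.filter (fun i => i % 3 = 1), f i)
      + ∑ i ∈ s.filter (fun i => i % 3 = 2), f i := by
  have e1 : (s.filter (fun i => ¬ i % 3 = 0)).filter (fun i => i % 3 = 1)
      = s.filter (fun i => i % 3 = 1) := by
    rw [Finset.filter_filter]
    exact Finset.filter_congr (fun i _ => by constructor <;> omega)
  have e2 : (s.filter (fun i => ¬ i % 3 = 0)).filter (fun i => ¬ i % 3 = 1)
      = s.filter (fun i => i % 3 = 2) := by
    rw [Finset.filter_filter]
    exact Finset.filter_congr (fun i _ => by constructor <;> omega)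
  have h0 := Finset.sum_filter_add_sum_filter_not s (fun i => i % 3 = 0) f
  have h1 := Finset.sum_filter_add_sum_filter_not
    (s.filter (fun i => ¬ i % 3 = 0)) (fun i => i % 3 = 1) f
  rw [e1, e2] at h1
  rw [← h0, ← h1, add_assoc]

section Bucket

lemma buckets {K : Type*} [Field K] (h3 : (3:K) ≠ 0) (N : ℕ) (c : ZMod N → K)
    (hd1 : ((X : K[X]) - 1) ∣ toPoly N c) (hd2 : ((X : K[X])^2 + X + 1) ∣ toPoly N c)
    (m : ℕ) :
    ∑ i ∈ (Finset.range N).filter (fun i => i % 3 = m), c ↑i = 0 := by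
  rcases Nat.lt_or_ge m 3 with hm | hm
  swap
  · rw [Finset.filter_false_of_mem (fun i _ => by omega), Finset.sum_empty]
  set F := (X^2+X+1 : K[X]).SplittingField with hF
  have hdeg : (X^2+X+1 : K[X]).degree = 2 := by compute_degree!
  obtain ⟨ω, hωe⟩ := Splits.exists_eval_eq_zero
    (SplittingField.splits (X^2+X+1 : K[X])) (by rw [degree_map, hdeg]; norm_num)
  have hω : ω^2 + ω + 1 = 0 := by
    have := hωe
    rw [eval_map] at this
    simp only [eval₂_add, eval₂_pow, eval₂_X, eval₂_one] at this
    exact this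
  set ω' : F := -1 - ω with hω'def
  have hω' : ω'^2 + ω' + 1 = 0 := by rw [hω'def]; linear_combination hω
  set φ := algebraMap K F with hφ
  have hinj : Function.Injective φ := (algebraMap K F).injective
  have h3F : (3 : F) ≠ 0 := by
    intro h
    apply h3
    apply hinj
    rw [map_ofNat, map_zero]
    exact h
  have h1ω : (1 : F) ≠ ω := by
    intro h; exact h3F (by linear_combination hω + (ω + 2) * h)
  have h1ω' : (1 : F) ≠ ω' := by
    intro h; exact h3F (by linear_combination hω' + (ω' + 2) * h)
  have hωω' : ω ≠ ω' := by
    intro h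
    apply h3F
    have h2 : 2*ω + 1 = 0 := by rw [hω'def] at h; linear_combination h
    linear_combination 4*hω - (2*ω + 1)*h2
  have hev : ∀ t : F, t^2 + t + 1 = 0 → (aeval t) (toPoly N c) = 0 := by
    intro t ht
    obtain ⟨q, hq⟩ := hd2
    rw [hq, map_mul]
    have : (aeval t) ((X : K[X])^2 + X + 1) = t^2 + t + 1 := by simp
    rw [this, ht, zero_mul]
  have hev1 : (aeval (1:F)) (toPoly N c) = 0 := by
    obtain ⟨q, hq⟩ := hd1
    rw [hq, map_mul]
    have : (aeval (1:F)) ((X : K[X]) - 1) = 0 := by simp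
    rw [this, zero_mul]
  have hcube : ∀ t : F, t^2 + t + 1 = 0 → t^3 = 1 := by
    intro t ht; linear_combination (t - 1) * ht
  set A0 := ∑ i ∈ (Finset.range N).filter (fun i => i % 3 = 0), c ↑i with hA0
  set A1 := ∑ i ∈ (Finset.range N).filter (fun i => i % 3 = 1), c ↑i with hA1
  set A2 := ∑ i ∈ (Finset.range N).filter (fun i => i % 3 = 2), c ↑i with hA2
  have hsplit : ∀ f : ℕ → F, ∑ i ∈ range N, f i =
      ((∑ i ∈ (range N).filter (fun i => i % 3 = 0), f i)
        + (∑ i ∈ (range N).filter (fun i => i % 3 = 1), f i))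
        + (∑ i ∈ (range N).filter (fun i => i % 3 = 2), f i) :=
    fun f => sum_split3 (range N) f
  have expand : ∀ t : F, t^3 = 1 →
      (aeval t) (toPoly N c) = φ A0 + φ A1 * t + φ A2 * t^2 := by
    intro t ht
    have e1 : (aeval t) (toPoly N c) = ∑ i ∈ range N, φ (c ↑i) * t ^ (i % 3) := by
      rw [toPoly, map_sum]
      refine Finset.sum_congr rfl fun i _ => ?_
      rw [map_mul, map_pow, aeval_X, aeval_C]
      congr 1
      conv_lhs => rw [← Nat.div_add_mod i 3]
      rw [pow_add, pow_mul, ht, one_pow, one_mul]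
    rw [e1, hsplit (fun i => φ (c ↑i) * t ^ (i % 3))]
    have bucket : ∀ m : ℕ, (∑ i ∈ (range N).filter (fun i => i % 3 = m), φ (c ↑i) * t ^ (i % 3))
        = φ (∑ i ∈ (range N).filter (fun i => i % 3 = m), c ↑i) * t ^ m := by
      intro m'
      rw [map_sum, Finset.sum_mul]
      refine Finset.sum_congr rfl fun i hi => ?_
      rw [(Finset.mem_filter.mp hi).2]
    rw [bucket 0, bucket 1, bucket 2, pow_zero, mul_one, pow_one]
  have E1 : φ A0 + φ A1 * 1 + φ A2 * 1^2 = 0 := by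
    rw [← expand 1 (one_pow 3)]; exact hev1
  have Eω : φ A0 + φ A1 * ω + φ A2 * ω^2 = 0 := by
    rw [← expand ω (hcube ω hω)]; exact hev ω hω
  have Eω' : φ A0 + φ A1 * ω' + φ A2 * ω'^2 = 0 := by
    rw [← expand ω' (hcube ω' hω')]; exact hev ω' hω'
  obtain ⟨hz0, hz1, hz2⟩ := vand3dual h1ω h1ω' hωω' E1 Eω Eω'
  have hzero : ∀ a : K, φ a = 0 → a = 0 := by
    intro a ha; apply hinj; rw [ha, map_zero]
  interval_cases m
  · exact hzero _ hz0
  · exact hzero _ hz1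
  · exact hzero _ hz2

end Bucket

section Helpers
open Polynomial Finset

variable {p : ℕ} [hp : Fact p.Prime]

lemma castinj {n a b : ℕ} (ha : a < 3*p) (hb : b < 3*p) :
    ((a : ZMod (3*p)) = (b : ZMod (3*p))) ↔ a = b := by
  rw [ZMod.natCast_eq_natCast_iff', Nat.mod_eq_of_lt ha, Nat.mod_eq_of_lt hb]

lemma crt3p (hp5 : 5 ≤ p) {a b : ℕ} (ha : a < 3*p) (hb : b < 3*p) (h3 : a % 3 = b % 3)
    (hpp : (a : ZMod p) = (b : ZMod p)) : a = b := by
  have hcop : Nat.Coprime 3 p :=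
    (Nat.coprime_primes (by norm_num) hp.out).mpr (by omega)
  have hmp : a ≡ b [MOD p] := (ZMod.natCast_eq_natCast_iff a b p).mp hpp
  have h3' : a ≡ b [MOD 3] := h3
  have hfin := (Nat.modEq_and_modEq_iff_modEq_mul hcop).mp ⟨h3', hmp⟩
  have : a % (3*p) = b % (3*p) := hfin
  rwa [Nat.mod_eq_of_lt ha, Nat.mod_eq_of_lt hb] at this

lemma small_ne (hp5 : 5 ≤ p) (t : ℕ) (h1 : 0 < t) (h2 : t < p) : ((t : ℕ) : ZMod p) ≠ 0 := by
  intro h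
  rw [ZMod.natCast_eq_zero_iff] at h
  exact absurd (Nat.le_of_dvd h1 h) (by omega)

end Helpers

section LowerBound
open Polynomial Finset

theorem lower_bound {p : ℕ} [hp : Fact p.Prime] (hp5 : 5 ≤ p) (c : ZMod (3*p) → ZMod p)
    (hdvd : ((X - 1) ^ 4 * (X ^ 2 + X + 1) : (ZMod p)[X]) ∣ toPoly (3*p) c) (hc0 : c ≠ 0) :
    7 ≤ ((Finset.range (3*p)).filter fun i : ℕ =>
      (c (↑i), c (↑i + 1)) ≠ ((0 : ZMod p), (0 : ZMod p))).card := by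
  classical
  by_contra hlt
  push_neg at hlt
  have hn15 : 15 ≤ 3*p := by omega
  haveI : NeZero (3*p) := ⟨by omega⟩
  have hd4 : ((X : (ZMod p)[X]) - 1)^4 ∣ toPoly (3*p) c := dvd_trans (dvd_mul_right _ _) hdvd
  have hd1 : ((X : (ZMod p)[X]) - 1) ∣ toPoly (3*p) c :=
    dvd_trans (dvd_pow_self _ (by norm_num)) hd4
  have hdc : ((X : (ZMod p)[X])^2 + X + 1) ∣ toPoly (3*p) c := dvd_trans (dvd_mul_left _ _) hdvd
  set S := (range (3*p)).filter (fun i : ℕ => c ↑i ≠ 0) with hS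
  set T := (range (3*p)).filter (fun i : ℕ => (c ↑i, c (↑i+1)) ≠ ((0:ZMod p),(0:ZMod p))) with hT
  have hTcard : T.card ≤ 6 := by omega
  have hmemS : ∀ i ∈ S, i < 3*p ∧ c ↑i ≠ 0 := by
    intro i hi
    have := Finset.mem_filter.mp hi
    exact ⟨Finset.mem_range.mp this.1, this.2⟩
  have hmemS' : ∀ i : ℕ, i < 3*p → c ↑i ≠ 0 → i ∈ S := by
    intro i h1 h2; exact Finset.mem_filter.mpr ⟨Finset.mem_range.mpr h1, h2⟩
  have hSsub : S ⊆ T := by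
    intro i hi
    obtain ⟨h1, h2⟩ := hmemS i hi
    refine Finset.mem_filter.mpr ⟨Finset.mem_range.mpr h1, ?_⟩
    intro heq
    exact h2 (congrArg Prod.fst heq)
  -- successor function
  set succ : ℕ → ℕ := fun i => if i = 3*p - 1 then 0 else i + 1 with hsucc
  have hsucc_lt : ∀ i, i < 3*p → succ i < 3*p := by
    intro i h; simp only [hsucc]; split <;> omega
  have hsucc_ne : ∀ i, i < 3*p → succ i ≠ i := by
    intro i h; simp only [hsucc]; split <;> omega
  have hsucc_inj : ∀ i j, i < 3*p → j < 3*p → succ i = succ j → i = j := by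
    intro i j hi hj h; simp only [hsucc] at h; split at h <;> split at h <;> omega
  have hsucc_cast : ∀ i, i < 3*p → ((succ i : ℕ) : ZMod (3*p)) = ↑i + 1 := by
    intro i h; simp only [hsucc]; split
    · rename_i h1
      subst h1
      have h2 : ((3*p-1 : ℕ) : ZMod (3*p)) + 1 = ((3*p-1+1 : ℕ) : ZMod (3*p)) := by push_cast; ring
      rw [h2, show 3*p-1+1 = 3*p from by omega, ZMod.natCast_self]
      simp
    · push_cast; ring
  have hsucc_node : ∀ i, i < 3*p → ((succ i : ℕ) : ZMod p) = ((i : ℕ) : ZMod p) + 1 := by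
    intro i h; simp only [hsucc]; split
    · rename_i h1
      subst h1
      have h2 : ((3*p-1 : ℕ) : ZMod p) + 1 = ((3*p-1+1 : ℕ) : ZMod p) := by push_cast; ring
      rw [h2, show 3*p-1+1 = 3*p from by omega]
      push_cast [ZMod.natCast_self]
      ring
    · push_cast; ring
  have hsucc_mod3 : ∀ i, i < 3*p → succ i % 3 = (i+1) % 3 := by
    intro i h; simp only [hsucc]; split <;> omega
  have hsucc_c : ∀ i, i < 3*p → c (↑i + 1) = c ↑(succ i) := by
    intro i h; rw [hsucc_cast i h]
  -- adjacency set
  set D := S.filter (fun i => succ i ∈ S) with hD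
  have hDS : D ⊆ S := Finset.filter_subset _ _
  have hmemD : ∀ i ∈ D, i ∈ S ∧ succ i ∈ S := by
    intro i hi; have := Finset.mem_filter.mp hi; exact ⟨this.1, this.2⟩
  set predf : ℕ → ℕ := fun j => if j = 0 then 3*p - 1 else j - 1 with hpredf
  have hsucc_pred : ∀ j, j < 3*p → succ (predf j) = j := by
    intro j h; simp only [hpredf, hsucc]; split <;> split <;> omega
  have hpred_lt : ∀ j, j < 3*p → predf j < 3*p := by
    intro j h; simp only [hpredf]; split <;> omega
  set predS := S.image predf with hpredS
  have hpred_T : predS ⊆ T := by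
    intro i hi
    obtain ⟨j, hjS, rfl⟩ := Finset.mem_image.mp hi
    obtain ⟨hj1, hj2⟩ := hmemS j hjS
    refine Finset.mem_filter.mpr ⟨Finset.mem_range.mpr (hpred_lt j hj1), ?_⟩
    intro heq
    have h2 : c (↑(predf j) + 1) = c ↑j := by
      rw [hsucc_c (predf j) (hpred_lt j hj1), hsucc_pred j hj1]
    exact hj2 (h2 ▸ congrArg Prod.snd heq)
  have hpred_card : predS.card = S.card := by
    apply Finset.card_image_of_injOn
    intro a ha b hb heq
    have ha' := (hmemS a ha).1
    have hb' := (hmemS b hb).1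
    simp only [hpredf] at heq
    split at heq <;> split at heq <;> omega
  have hinterD : S ∩ predS ⊆ D := by
    intro i hi
    obtain ⟨hi1, hi2⟩ := Finset.mem_inter.mp hi
    obtain ⟨j, hjS, rfl⟩ := Finset.mem_image.mp hi2
    refine Finset.mem_filter.mpr ⟨hi1, ?_⟩
    rwa [hsucc_pred j (hmemS j hjS).1]
  have hDcard : 2 * S.card ≤ 6 + D.card := by
    have h1 := Finset.card_union_add_card_inter S predS
    have h2 : (S ∪ predS).card ≤ 6 :=
      le_trans (Finset.card_le_card (Finset.union_subset hSsub hpred_T)) hTcard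
    have h3 : (S ∩ predS).card ≤ D.card := Finset.card_le_card hinterD
    omega
  -- algebraic conditions
  have hM : ∀ r < 4, ∑ i ∈ S, c ↑i * ((i:ℕ) : ZMod p)^r = 0 := by
    intro r hr
    have hmom := moments (3*p) c hd4 r hr
    have hfil := Finset.sum_filter_of_ne (s := range (3*p))
      (f := fun i : ℕ => c ↑i * ((i:ℕ) : ZMod p)^r) (p := fun i : ℕ => c ↑i ≠ 0)
      (fun x _ hx h0 => hx (by simp [h0]))
    rw [← hfil] at hmom
    exact hmom
  have h3K : (3 : ZMod p) ≠ 0 := by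
    have := small_ne hp5 3 (by norm_num) (by omega)
    exact_mod_cast this
  have hB : ∀ m : ℕ, ∑ i ∈ S.filter (fun i => i % 3 = m), c ↑i = 0 := by
    intro m
    have hb := buckets h3K (3*p) c hd1 hdc m
    have hfil := Finset.sum_filter_of_ne (s := (range (3*p)).filter (fun i => i % 3 = m))
      (f := fun i : ℕ => c ↑i) (p := fun i : ℕ => c ↑i ≠ 0) (fun x _ hx => hx)
    rw [← hfil] at hb
    have heq : ((range (3*p)).filter (fun i => i % 3 = m)).filter (fun i : ℕ => c ↑i ≠ 0)
        = S.filter (fun i => i % 3 = m) := by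
      rw [hS, Finset.filter_filter, Finset.filter_filter]
      exact Finset.filter_congr (fun i _ => by tauto)
    rw [heq] at hb
    exact hb
  -- S nonempty
  obtain ⟨v0, hv0⟩ : ∃ v, c v ≠ 0 := by
    by_contra h; push_neg at h; exact hc0 (funext h)
  have hv0S : v0.val ∈ S := by
    apply hmemS' _ (ZMod.val_lt v0)
    rwa [ZMod.natCast_zmod_val]
  have hScard_pos : 1 ≤ S.card := Finset.card_pos.mpr ⟨v0.val, hv0S⟩
  have hScard6 : S.card ≤ 6 := le_trans (Finset.card_le_card hSsub) hTcard
  -- singleton-bucket dispatch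
  by_cases hsing : ∃ i ∈ S, ∀ j ∈ S, j % 3 = i % 3 → j = i
  · obtain ⟨i, hiS, hiu⟩ := hsing
    have hfe : S.filter (fun j => j % 3 = i % 3) = {i} := by
      ext j
      simp only [Finset.mem_filter, Finset.mem_singleton]
      constructor
      · rintro ⟨hjS, hj3⟩; exact hiu j hjS hj3
      · rintro rfl; exact ⟨hiS, rfl⟩
    have hbi := hB (i % 3)
    rw [hfe, Finset.sum_singleton] at hbi
    exact (hmemS i hiS).2 hbi
  push_neg at hsing
  have hpartner : ∀ i ∈ S, ∃ j ∈ S, j % 3 = i % 3 ∧ j ≠ i := hsing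
  have hnode_ne : ∀ i ∈ S, ∀ j ∈ S, i ≠ j → i % 3 = j % 3 → ((i:ℕ):ZMod p) ≠ ((j:ℕ):ZMod p) := by
    intro i hi j hj hne h3 heq
    exact hne (crt3p hp5 (hmemS i hi).1 (hmemS j hj).1 h3 heq)
  have h16 : S.card = 1 ∨ S.card = 2 ∨ S.card = 3 ∨ S.card = 4 ∨ S.card = 5 ∨ S.card = 6 := by
    omega
  rcases h16 with h | h | h | h | h | h
  · -- card 1
    obtain ⟨i, hi⟩ := Finset.card_eq_one.mp h
    have hiS : i ∈ S := by rw [hi]; exact Finset.mem_singleton_self i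
    obtain ⟨j, hjS, _, hji⟩ := hpartner i hiS
    rw [hi, Finset.mem_singleton] at hjS
    exact hji hjS
  · -- card 2
    obtain ⟨i, j, hij, hSij⟩ := Finset.card_eq_two.mp h
    have hiS : i ∈ S := by rw [hSij]; simp
    have hjS : j ∈ S := by rw [hSij]; simp
    obtain ⟨j', hj'S, hj'3, hj'i⟩ := hpartner i hiS
    have hj'j : j' = j := by
      rw [hSij] at hj'S
      rcases Finset.mem_insert.mp hj'S with h' | h'
      · exact absurd h' hj'i
      · exact Finset.mem_singleton.mp h'
    have hj3 : j % 3 = i % 3 := by rw [← hj'j]; exact hj'3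
    have hnd : ((i:ℕ):ZMod p) ≠ ((j:ℕ):ZMod p) := hnode_ne i hiS j hjS hij (by omega)
    have E0 := hM 0 (by norm_num)
    have E1 := hM 1 (by norm_num)
    rw [hSij, Finset.sum_pair hij] at E0 E1
    have A0 : c ↑i + c ↑j = 0 := by linear_combination E0
    have A1 : c ↑i * ((i:ℕ):ZMod p) + c ↑j * ((j:ℕ):ZMod p) = 0 := by linear_combination E1
    exact (hmemS i hiS).2 (vand2 hnd A0 A1)
  · -- card 3
    obtain ⟨i, j, k, hij, hik, hjk, hSijk⟩ := Finset.card_eq_three.mp h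
    have hiS : i ∈ S := by rw [hSijk]; simp
    have hjS : j ∈ S := by rw [hSijk]; simp
    have hkS : k ∈ S := by rw [hSijk]; simp
    have hall : j % 3 = i % 3 ∧ k % 3 = i % 3 := by
      obtain ⟨j', hj'S, hj'3, hj'i⟩ := hpartner i hiS
      rw [hSijk] at hj'S
      simp only [Finset.mem_insert, Finset.mem_singleton] at hj'S
      rcases hj'S with rfl | rfl | rfl
      · exact absurd rfl hj'i
      · obtain ⟨k', hk'S, hk'3, hk'k⟩ := hpartner k hkS
        rw [hSijk] at hk'S
        simp only [Finset.mem_insert, Finset.mem_singleton] at hk'S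
        rcases hk'S with rfl | rfl | rfl
        · exact ⟨hj'3, by omega⟩
        · exact ⟨hj'3, by omega⟩
        · exact absurd rfl hk'k
      · obtain ⟨k', hk'S, hk'3, hk'k⟩ := hpartner j hjS
        rw [hSijk] at hk'S
        simp only [Finset.mem_insert, Finset.mem_singleton] at hk'S
        rcases hk'S with rfl | rfl | rfl
        · exact ⟨by omega, hj'3⟩
        · exact absurd rfl hk'k
        · exact ⟨by omega, hj'3⟩
    have hxy : ((i:ℕ):ZMod p) ≠ ((j:ℕ):ZMod p) := hnode_ne i hiS j hjS hij (by omega)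
    have hxz : ((i:ℕ):ZMod p) ≠ ((k:ℕ):ZMod p) := hnode_ne i hiS k hkS hik (by omega)
    have hnm : i ∉ insert j ({k} : Finset ℕ) := by simp [hij, hik]
    have E0 := hM 0 (by norm_num)
    have E1 := hM 1 (by norm_num)
    have E2 := hM 2 (by norm_num)
    rw [hSijk, Finset.sum_insert hnm, Finset.sum_pair hjk] at E0 E1 E2
    have A0 : c ↑i + c ↑j + c ↑k = 0 := by linear_combination E0
    have A1 : c ↑i * ((i:ℕ):ZMod p) + c ↑j * ((j:ℕ):ZMod p) + c ↑k * ((k:ℕ):ZMod p) = 0 := by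
      linear_combination E1
    have A2 : c ↑i * ((i:ℕ):ZMod p)^2 + c ↑j * ((j:ℕ):ZMod p)^2 + c ↑k * ((k:ℕ):ZMod p)^2 = 0 := by
      linear_combination E2
    exact (hmemS i hiS).2 (vand3 hxy hxz A0 A1 A2)
  · -- card 4
    obtain ⟨d, hdD, d2, hd2D, hdd2⟩ := Finset.one_lt_card.mp (show 1 < D.card by omega)
    obtain ⟨hdS, hdsS⟩ := hmemD d hdD
    have hdlt := (hmemS d hdS).1
    have helt := hsucc_lt d hdlt
    have he3 : succ d % 3 = (d+1) % 3 := hsucc_mod3 d hdlt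
    have hde : d ≠ succ d := Ne.symm (hsucc_ne d hdlt)
    obtain ⟨d', hd'S, hd'3, hd'd⟩ := hpartner d hdS
    obtain ⟨e', he'S, he'3, he'e⟩ := hpartner (succ d) hdsS
    have hd'lt := (hmemS d' hd'S).1
    have he'lt := (hmemS e' he'S).1
    have hd'e : d' ≠ succ d := by intro hh; rw [hh] at hd'3; omega
    have he'd : e' ≠ d := by intro hh; rw [hh] at he'3; omega
    have hd'e' : d' ≠ e' := by
      intro hh; have h5 := he'3; rw [← hh] at h5; omega
    have hsub : insert d (insert (succ d) (insert d' ({e'} : Finset ℕ))) ⊆ S := by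
      intro x hx
      simp only [Finset.mem_insert, Finset.mem_singleton] at hx
      rcases hx with rfl | rfl | rfl | rfl <;> assumption
    have hnm : d ∉ insert (succ d) (insert d' ({e'} : Finset ℕ)) := by
      simp [hde, Ne.symm hd'd, Ne.symm he'd]
    have hnm2 : succ d ∉ insert d' ({e'} : Finset ℕ) := by
      simp [Ne.symm hd'e, Ne.symm he'e]
    have hc4 : (insert d (insert (succ d) (insert d' ({e'} : Finset ℕ)))).card = 4 := by
      rw [Finset.card_insert_of_notMem hnm, Finset.card_insert_of_notMem hnm2,
        Finset.card_insert_of_notMem (by simp [hd'e']), Finset.card_singleton]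
    have hSeq : insert d (insert (succ d) (insert d' ({e'} : Finset ℕ))) = S :=
      Finset.eq_of_subset_of_card_le hsub (by omega)
    have hd2S := hDS hd2D
    obtain ⟨_, hsd2S⟩ := hmemD d2 hd2D
    have hd2lt := (hmemS d2 hd2S).1
    have hd2mem : d2 = d ∨ d2 = succ d ∨ d2 = d' ∨ d2 = e' := by
      rw [← hSeq] at hd2S
      simpa [Finset.mem_insert, Finset.mem_singleton] using hd2S
    have hresS : ∀ x ∈ S, x % 3 = d % 3 ∨ x % 3 = (d+1) % 3 := by
      intro x hx
      rw [← hSeq] at hx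
      simp only [Finset.mem_insert, Finset.mem_singleton] at hx
      rcases hx with rfl | rfl | rfl | rfl
      · left; rfl
      · right; exact he3
      · left; exact hd'3
      · right; omega
    rcases hd2mem with rfl | h2 | h2 | h2
    · exact hdd2 rfl
    · -- d2 = succ d : contradiction by residues
      have hss : succ (succ d) ∈ S := by rw [← h2]; exact hsd2S
      have ha := hsucc_mod3 (succ d) helt
      rcases hresS (succ (succ d)) hss with hr | hr <;> omega
    · -- d2 = d' : main structure
      have hsd' : succ d' ∈ S := by rw [← h2]; exact hsd2S
      have ha := hsucc_mod3 d' hd'lt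
      have hsd'3 : succ d' % 3 = (d+1) % 3 := by omega
      have hmem4 : succ d' = d ∨ succ d' = succ d ∨ succ d' = d' ∨ succ d' = e' := by
        rw [← hSeq] at hsd'
        simpa [Finset.mem_insert, Finset.mem_singleton] using hsd'
      rcases hmem4 with h4 | h4 | h4 | h4
      · have h5 := hsd'3; rw [h4] at h5; omega
      · exact absurd (hsucc_inj d' d hd'lt hdlt h4) hd'd
      · have h5 := hsd'3; rw [h4] at h5; omega
      · -- succ d' = e' : algebra
        have hnsd : ((succ d : ℕ) : ZMod p) = ((d:ℕ):ZMod p) + 1 := hsucc_node d hdlt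
        have hnsd' : ((e' : ℕ) : ZMod p) = ((d':ℕ):ZMod p) + 1 := by
          rw [← h4]; exact hsucc_node d' hd'lt
        have hxy : ((d:ℕ):ZMod p) ≠ ((d':ℕ):ZMod p) :=
          hnode_ne d hdS d' hd'S (Ne.symm hd'd) (by omega)
        have E : ∀ r < 4, c ↑d * ((d:ℕ):ZMod p)^r + c ↑(succ d) * (((d:ℕ):ZMod p)+1)^r
            + c ↑d' * ((d':ℕ):ZMod p)^r + c ↑e' * (((d':ℕ):ZMod p)+1)^r = 0 := by
          intro r hr
          have hm := hM r hr
          rw [← hSeq, Finset.sum_insert hnm, Finset.sum_insert hnm2,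
            Finset.sum_pair hd'e', hnsd, hnsd'] at hm
          linear_combination hm
        have E0 := E 0 (by norm_num)
        have E1 := E 1 (by norm_num)
        have E2 := E 2 (by norm_num)
        have E3 := E 3 (by norm_num)
        have h1ned : ((d:ℕ):ZMod p) ≠ ((d:ℕ):ZMod p) + 1 := by
          intro hh
          exact one_ne_zero (α := ZMod p) (by linear_combination -hh)
        have h2K : ((2:ℕ) : ZMod p) ≠ 0 := small_ne hp5 2 (by norm_num) (by omega)
        by_cases hyx1 : ((d':ℕ):ZMod p) = ((d:ℕ):ZMod p) + 1
        · rw [hyx1] at E0 E1 E2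
          have A0 : c ↑d + (c ↑(succ d) + c ↑d') + c ↑e' = 0 := by linear_combination E0
          have A1 : c ↑d * ((d:ℕ):ZMod p) + (c ↑(succ d) + c ↑d') * (((d:ℕ):ZMod p)+1)
              + c ↑e' * (((d:ℕ):ZMod p)+2) = 0 := by linear_combination E1
          have A2 : c ↑d * ((d:ℕ):ZMod p)^2 + (c ↑(succ d) + c ↑d') * (((d:ℕ):ZMod p)+1)^2
              + c ↑e' * (((d:ℕ):ZMod p)+2)^2 = 0 := by linear_combination E2
          have h2ned : ((d:ℕ):ZMod p) ≠ ((d:ℕ):ZMod p) + 2 := by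
            intro hh
            apply h2K
            push_cast
            linear_combination -hh
          exact (hmemS d hdS).2 (vand3 h1ned h2ned A0 A1 A2)
        · by_cases hxy1 : ((d:ℕ):ZMod p) = ((d':ℕ):ZMod p) + 1
          · rw [hxy1] at E0 E1 E2
            have A0 : c ↑d' + (c ↑e' + c ↑d) + c ↑(succ d) = 0 := by linear_combination E0
            have A1 : c ↑d' * ((d':ℕ):ZMod p) + (c ↑e' + c ↑d) * (((d':ℕ):ZMod p)+1)
                + c ↑(succ d) * (((d':ℕ):ZMod p)+2) = 0 := by linear_combination E1
            have A2 : c ↑d' * ((d':ℕ):ZMod p)^2 + (c ↑e' + c ↑d) * (((d':ℕ):ZMod p)+1)^2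
                + c ↑(succ d) * (((d':ℕ):ZMod p)+2)^2 = 0 := by linear_combination E2
            have h1ned' : ((d':ℕ):ZMod p) ≠ ((d':ℕ):ZMod p) + 1 := by
              intro hh
              exact one_ne_zero (α := ZMod p) (by linear_combination -hh)
            have h2ned' : ((d':ℕ):ZMod p) ≠ ((d':ℕ):ZMod p) + 2 := by
              intro hh
              apply h2K
              push_cast
              linear_combination -hh
            exact (hmemS d' hd'S).2 (vand3 h1ned' h2ned' A0 A1 A2)
          · have A0 : c ↑d + c ↑(succ d) + c ↑d' + c ↑e' = 0 := by linear_combination E0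
            have A1 : c ↑d * ((d:ℕ):ZMod p) + c ↑(succ d) * (((d:ℕ):ZMod p)+1)
                + c ↑d' * ((d':ℕ):ZMod p) + c ↑e' * (((d':ℕ):ZMod p)+1) = 0 := by
              linear_combination E1
            have A2 : c ↑d * ((d:ℕ):ZMod p)^2 + c ↑(succ d) * (((d:ℕ):ZMod p)+1)^2
                + c ↑d' * ((d':ℕ):ZMod p)^2 + c ↑e' * (((d':ℕ):ZMod p)+1)^2 = 0 := by
              linear_combination E2
            have A3 : c ↑d * ((d:ℕ):ZMod p)^3 + c ↑(succ d) * (((d:ℕ):ZMod p)+1)^3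
                + c ↑d' * ((d':ℕ):ZMod p)^3 + c ↑e' * (((d':ℕ):ZMod p)+1)^3 = 0 := by
              linear_combination E3
            exact (hmemS d hdS).2 (vand4 h1ned hxy hxy1 A0 A1 A2 A3)
    · -- d2 = e' : contradiction by residues
      have hse' : succ e' ∈ S := by rw [← h2]; exact hsd2S
      have ha := hsucc_mod3 e' he'lt
      rcases hresS (succ e') hse' with hr | hr <;> omega
  · -- card 5
    have hD4 : 4 ≤ D.card := by omega
    obtain ⟨d0, hd0D⟩ := Finset.card_pos.mp (show 0 < D.card by omega)
    obtain ⟨hd0S, hd0sS⟩ := hmemD d0 hd0D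
    have hd0lt := (hmemS d0 hd0S).1
    have hm3 := hsucc_mod3 d0 hd0lt
    have hge2 : ∀ m : ℕ, ∀ i ∈ S, i % 3 = m → 2 ≤ (S.filter (fun i => i % 3 = m)).card := by
      intro m i hiS him
      obtain ⟨j, hjS, hj3, hji⟩ := hpartner i hiS
      refine Finset.one_lt_card.mpr ⟨i, ?_, j, ?_, Ne.symm hji⟩
      · exact Finset.mem_filter.mpr ⟨hiS, him⟩
      · exact Finset.mem_filter.mpr ⟨hjS, by omega⟩
    have hdisj : ∀ m m' : ℕ, m ≠ m' →
        Disjoint (S.filter (fun i => i % 3 = m)) (S.filter (fun i => i % 3 = m')) := by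
      intro m m' hne
      rw [Finset.disjoint_left]
      intro a ha ha'
      have h1 := (Finset.mem_filter.mp ha).2
      have h2 := (Finset.mem_filter.mp ha').2
      omega
    have hpair_le : ∀ m m' : ℕ, m ≠ m' →
        (S.filter (fun i => i % 3 = m)).card + (S.filter (fun i => i % 3 = m')).card
          ≤ S.card := by
      intro m m' hne
      rw [← Finset.card_union_of_disjoint (hdisj m m' hne)]
      exact Finset.card_le_card (Finset.union_subset (Finset.filter_subset _ _)
        (Finset.filter_subset _ _))
    have htriple : ∀ m m' m'' : ℕ, m ≠ m' → m ≠ m'' → m' ≠ m'' →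
        (S.filter (fun i => i % 3 = m)).card + (S.filter (fun i => i % 3 = m')).card
          + (S.filter (fun i => i % 3 = m'')).card ≤ S.card := by
      intro m m' m'' h1 h2 h3
      rw [← Finset.card_union_of_disjoint (hdisj m m' h1), ← Finset.card_union_of_disjoint
        (Finset.disjoint_union_left.mpr ⟨hdisj m m'' h2, hdisj m' m'' h3⟩)]
      exact Finset.card_le_card (Finset.union_subset (Finset.union_subset
        (Finset.filter_subset _ _) (Finset.filter_subset _ _)) (Finset.filter_subset _ _))
    have hA2 : 2 ≤ (S.filter (fun i => i % 3 = d0 % 3)).card := hge2 _ d0 hd0S rfl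
    have hB2 : 2 ≤ (S.filter (fun i => i % 3 = (d0+1) % 3)).card := hge2 _ (succ d0) hd0sS hm3
    obtain ⟨mc, hmc1, hmc2, hmc3⟩ : ∃ mc, mc < 3 ∧ mc ≠ d0 % 3 ∧ mc ≠ (d0+1) % 3 :=
      ⟨3 - d0 % 3 - (d0+1) % 3, by omega, by omega, by omega⟩
    have hmc_empty : (S.filter (fun i => i % 3 = mc)).card = 0 := by
      by_contra hne
      have h2 : 2 ≤ (S.filter (fun i => i % 3 = mc)).card := by
        obtain ⟨a, ha⟩ := Finset.card_pos.mp (show 0 < (S.filter (fun i => i % 3 = mc)).card by omega)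
        obtain ⟨haS, ha3⟩ := Finset.mem_filter.mp ha
        exact hge2 mc a haS ha3
      have := htriple (d0 % 3) ((d0+1) % 3) mc (by omega) (by omega) (by omega)
      omega
    have hno : ∀ i ∈ S, i % 3 ≠ mc := by
      intro i hiS h3
      have hmem : i ∈ S.filter (fun i => i % 3 = mc) := Finset.mem_filter.mpr ⟨hiS, h3⟩
      have := Finset.card_pos.mpr ⟨i, hmem⟩
      omega
    have hDsub : D ⊆ S.filter (fun i => i % 3 = (mc+1) % 3) := by
      intro d hd
      obtain ⟨hdS, hdsS⟩ := hmemD d hd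
      have hdlt := (hmemS d hdS).1
      have h1 := hno d hdS
      have h2 := hno (succ d) hdsS
      rw [hsucc_mod3 d hdlt] at h2
      exact Finset.mem_filter.mpr ⟨hdS, by omega⟩
    have hd03 : d0 % 3 = (mc+1) % 3 := (Finset.mem_filter.mp (hDsub hd0D)).2
    have hs03 : (d0+1) % 3 = (mc+2) % 3 := by omega
    have hcard1 : 4 ≤ (S.filter (fun i => i % 3 = (mc+1) % 3)).card :=
      le_trans hD4 (Finset.card_le_card hDsub)
    have hcard2 : 2 ≤ (S.filter (fun i => i % 3 = (mc+2) % 3)).card := by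
      rw [← hs03]; exact hB2
    have := hpair_le ((mc+1) % 3) ((mc+2) % 3) (by omega)
    omega
  · -- card 6
    have hD6 : 6 ≤ D.card := by omega
    have hDeq : D = S := Finset.eq_of_subset_of_card_le hDS (by omega)
    have hclosed : ∀ i ∈ S, succ i ∈ S := by
      intro i hi
      rw [← hDeq] at hi
      exact (hmemD i hi).2
    have hv0lt : v0.val < 3*p := ZMod.val_lt v0
    have horb : ∀ k : ℕ, ((v0.val + k) % (3*p)) ∈ S := by
      intro k
      induction k with
      | zero => simpa [Nat.mod_eq_of_lt hv0lt] using hv0S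
      | succ k ih =>
        have hlt' : (v0.val + k) % (3*p) < 3*p := Nat.mod_lt _ (by omega)
        have hmem := hclosed _ ih
        have heq : succ ((v0.val + k) % (3*p)) = (v0.val + (k+1)) % (3*p) := by
          have h2 : (v0.val + k + 1) % (3*p) = ((v0.val + k) % (3*p) + 1) % (3*p) := by
            conv_lhs => rw [← Nat.mod_add_mod]
          simp only [hsucc]
          split
          · rename_i h1
            rw [show v0.val + (k+1) = v0.val + k + 1 from by omega, h2, h1,
              show 3*p - 1 + 1 = 3*p from by omega, Nat.mod_self]
          · rename_i h1
            have hlt2 : (v0.val + k) % (3*p) + 1 < 3*p := by omega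
            rw [show v0.val + (k+1) = v0.val + k + 1 from by omega, h2,
              Nat.mod_eq_of_lt hlt2]
        rwa [heq] at hmem
    have hsub : range (3*p) ⊆ S := by
      intro j hj
      have hjlt := Finset.mem_range.mp hj
      have hj2 := horb (j + 3*p - v0.val)
      rw [show v0.val + (j + 3*p - v0.val) = j + 3*p from by omega] at hj2
      rwa [Nat.add_mod_right, Nat.mod_eq_of_lt hjlt] at hj2
    have hfin := Finset.card_le_card hsub
    rw [Finset.card_range] at hfin
    omega
end LowerBound

section Existence
open Polynomial Finset

theorem existence {p : ℕ} [hp : Fact p.Prime] (hp5 : 5 ≤ p) :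
    ∃ c : ZMod (3*p) → ZMod p, ((X - 1)^4 * (X^2 + X + 1) : (ZMod p)[X]) ∣ toPoly (3*p) c ∧
      c ≠ 0 ∧ ((Finset.range (3*p)).filter fun i : ℕ =>
        (c ↑i, c (↑i+1)) ≠ ((0:ZMod p),(0:ZMod p))).card = 7 := by
  classical
  have hp3 : p % 3 ≠ 0 := by
    intro h
    have h3 : (3:ℕ) ∣ p := by omega
    have := (Nat.prime_dvd_prime_iff_eq (by norm_num) hp.out).mp h3
    omega
  set q : ℕ := if p % 3 = 2 then p else p + 1 with hqdef
  have hq2 : q % 3 = 2 := by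
    simp only [hqdef]; split <;> omega
  have hqr : q = p ∨ q = p + 1 := by
    simp only [hqdef]; split
    · left; rfl
    · right; rfl
  set A : ℕ := 2*p + 1 - q with hAdef
  set B : ℕ := p + q with hBdef
  have hA2 : 2 < A := by omega
  have hAB : A + 1 < B := by omega
  have hB3p : B + 1 < 3*p := by omega
  set c : ZMod (3*p) → ZMod p := fun v =>
    if v = ((0:ℕ) : ZMod (3*p)) then 1 else if v = ((1:ℕ) : ZMod (3*p)) then 1
    else if v = ((A:ℕ) : ZMod (3*p)) then -1 else if v = ((B:ℕ) : ZMod (3*p)) then -1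
    else 0 with hcdef
  have hc_eval : ∀ i : ℕ, i < 3*p → c ↑i =
      (if i = 0 then 1 else if i = 1 then 1 else if i = A then -1 else if i = B then -1
        else 0) := by
    intro i hi
    have e0 := castinj (n := 3*p) (a := i) (b := 0) hi (by omega)
    have e1 := castinj (n := 3*p) (a := i) (b := 1) hi (by omega)
    have eA := castinj (n := 3*p) (a := i) (b := A) hi (by omega)
    have eB := castinj (n := 3*p) (a := i) (b := B) hi (by omega)
    simp only [hcdef, e0, e1, eA, eB]
  have hc0 : c ≠ 0 := by
    intro h
    have h0 := congrFun h ((0:ℕ) : ZMod (3*p))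
    rw [hc_eval 0 (by omega)] at h0
    simp at h0
  have htp : toPoly (3*p) c = 1 + X - X^A - X^B := by
    rw [toPoly]
    have hterm : ∀ i ∈ Finset.range (3*p), C (c ↑i) * X^i
        = ((if i = 0 then (X:(ZMod p)[X])^i else 0) + (if i = 1 then (X:(ZMod p)[X])^i else 0))
          + ((if i = A then -(X:(ZMod p)[X])^i else 0)
            + (if i = B then -(X:(ZMod p)[X])^i else 0)) := by
      intro i hi
      rw [hc_eval i (Finset.mem_range.mp hi)]
      split_ifs with h1 h2 h3 h4 <;> first | omega | simp
    rw [Finset.sum_congr rfl hterm, Finset.sum_add_distrib, Finset.sum_add_distrib,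
      Finset.sum_add_distrib]
    rw [Finset.sum_ite_eq' (Finset.range (3*p)) 0 (fun i => (X:(ZMod p)[X])^i),
      Finset.sum_ite_eq' (Finset.range (3*p)) 1 (fun i => (X:(ZMod p)[X])^i),
      Finset.sum_ite_eq' (Finset.range (3*p)) A (fun i => -(X:(ZMod p)[X])^i),
      Finset.sum_ite_eq' (Finset.range (3*p)) B (fun i => -(X:(ZMod p)[X])^i)]
    rw [if_pos (Finset.mem_range.mpr (by omega)), if_pos (Finset.mem_range.mpr (by omega)),
      if_pos (Finset.mem_range.mpr (by omega)), if_pos (Finset.mem_range.mpr (by omega))]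
    rw [pow_zero, pow_one]
    ring
  have hchar : ((X : (ZMod p)[X]) - 1)^p = X^p - 1 := by
    have h2 : ((X : (ZMod p)[X]) - 1) ^ p = X ^ p - 1 ^ p := sub_pow_char (x := (X : (ZMod p)[X])) (y := 1)
    simpa using h2
  have hdvd1 : ((X - 1 : (ZMod p)[X]))^4 ∣ (1 - X^p) := by
    refine ⟨-((X - 1)^(p-4)), ?_⟩
    have hmul : (X - 1 : (ZMod p)[X])^4 * -((X-1)^(p-4)) = -((X-1)^p) := by
      rw [mul_neg, ← pow_add, show 4 + (p - 4) = p from by omega]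
    rw [hmul, hchar]
    ring
  have hdvd2 : ((X:(ZMod p)[X])^2 + X + 1) ∣ (1 + X + X^q) := by
    set m := q / 3 with hm
    have hq3 : q = 3*m + 2 := by omega
    have key : ((X:(ZMod p)[X])^3 - 1) * (∑ i ∈ Finset.range m, (X^3)^i) = X^(3*m) - 1 := by
      have hg := geom_sum_mul ((X:(ZMod p)[X])^3) m
      rw [← pow_mul] at hg
      linear_combination hg
    refine ⟨1 + X^2 * (X - 1) * (∑ i ∈ Finset.range m, (X^3)^i), ?_⟩
    rw [hq3, pow_add]
    linear_combination (-(X:(ZMod p)[X])^2) * key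
  have hdvd : ((X - 1)^4 * (X^2 + X + 1) : (ZMod p)[X]) ∣ toPoly (3*p) c := by
    have hid : (1 + X - X^A - X^B : (ZMod p)[X]) = (1 - X^p) * (1 + X + X^q) := by
      rcases hqr with hq | hq
      · rw [show A = p + 1 from by omega, show B = 2*p from by omega, hq]
        ring
      · rw [show A = p from by omega, show B = 2*p + 1 from by omega, hq]
        ring
    rw [htp, hid]
    exact mul_dvd_mul hdvd1 hdvd2
  have hfilter : ((Finset.range (3*p)).filter fun i : ℕ =>
      (c ↑i, c (↑i+1)) ≠ ((0:ZMod p),(0:ZMod p)))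
      = {0, 1, A-1, A, B-1, B, 3*p-1} := by
    ext i
    simp only [Finset.mem_filter, Finset.mem_range, Finset.mem_insert, Finset.mem_singleton]
    constructor
    · rintro ⟨hi, hne⟩
      have hor : c ↑i ≠ 0 ∨ c (↑i + 1) ≠ 0 := by
        by_contra hcon
        push_neg at hcon
        exact hne (by rw [hcon.1, hcon.2])
      rcases hor with h | h
      · rw [hc_eval i hi] at h
        split_ifs at h with h1 h2 h3 h4 <;>
          first | omega | exact absurd rfl h | contradiction
      · by_cases hi1 : i + 1 < 3*p
        · have hcast : (↑i + 1 : ZMod (3*p)) = ↑(i+1) := by push_cast; ring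
          rw [hcast, hc_eval (i+1) hi1] at h
          split_ifs at h with h1 h2 h3 h4 <;>
            first | omega | exact absurd rfl h | contradiction
        · omega
    · intro hcase
      have hilt : i < 3*p := by omega
      refine ⟨hilt, ?_⟩
      intro heq
      have hfst : c ↑i = 0 := congrArg Prod.fst heq
      have hsnd : c (↑i + 1) = 0 := congrArg Prod.snd heq
      have hneg : (-1 : ZMod p) ≠ 0 := by
        intro hh
        exact one_ne_zero (α := ZMod p) (by linear_combination -hh)
      rcases hcase with rfl | rfl | rfl | rfl | rfl | rfl | rfl
      · rw [hc_eval 0 (by omega)] at hfst; simp at hfst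
      · rw [hc_eval 1 (by omega)] at hfst; norm_num at hfst
      · have hstep : ((A-1 : ℕ) : ZMod (3*p)) + 1 = ((A:ℕ) : ZMod (3*p)) := by
          rw [show (A:ℕ) = (A-1)+1 from by omega]
          push_cast; ring
        rw [hstep, hc_eval A (by omega), if_neg (by omega), if_neg (by omega),
          if_pos rfl] at hsnd
        exact hneg hsnd
      · rw [hc_eval A (by omega), if_neg (by omega), if_neg (by omega), if_pos rfl] at hfst
        exact hneg hfst
      · have hstep : ((B-1 : ℕ) : ZMod (3*p)) + 1 = ((B:ℕ) : ZMod (3*p)) := by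
          rw [show (B:ℕ) = (B-1)+1 from by omega]
          push_cast; ring
        rw [hstep, hc_eval B (by omega), if_neg (by omega), if_neg (by omega),
          if_neg (by omega), if_pos rfl] at hsnd
        exact hneg hsnd
      · rw [hc_eval B (by omega), if_neg (by omega), if_neg (by omega), if_neg (by omega),
          if_pos rfl] at hfst
        exact hneg hfst
      · have hstep : ((3*p-1 : ℕ) : ZMod (3*p)) + 1 = ((0:ℕ) : ZMod (3*p)) := by
          have hz : ((0:ℕ) : ZMod (3*p)) = ((3*p : ℕ) : ZMod (3*p)) := by
            rw [ZMod.natCast_self]; simp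
          rw [hz, show (3*p:ℕ) = (3*p-1)+1 from by omega]
          push_cast; ring
        rw [hstep, hc_eval 0 (by omega)] at hsnd
        simp at hsnd
  have hcard : ({0, 1, A-1, A, B-1, B, 3*p-1} : Finset ℕ).card = 7 := by
    rw [Finset.card_insert_of_notMem (by
        simp only [Finset.mem_insert, Finset.mem_singleton]; push_neg
        refine ⟨by omega, by omega, by omega, by omega, by omega, by omega⟩),
      Finset.card_insert_of_notMem (by
        simp only [Finset.mem_insert, Finset.mem_singleton]; push_neg
        refine ⟨by omega, by omega, by omega, by omega, by omega⟩),
      Finset.card_insert_of_notMem (by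
        simp only [Finset.mem_insert, Finset.mem_singleton]; push_neg
        refine ⟨by omega, by omega, by omega, by omega⟩),
      Finset.card_insert_of_notMem (by
        simp only [Finset.mem_insert, Finset.mem_singleton]; push_neg
        refine ⟨by omega, by omega, by omega⟩),
      Finset.card_insert_of_notMem (by
        simp only [Finset.mem_insert, Finset.mem_singleton]; push_neg
        refine ⟨by omega, by omega⟩),
      Finset.card_insert_of_notMem (by
        simp only [Finset.mem_singleton]; omega),
      Finset.card_singleton]
  exact ⟨c, hdvd, hc0, by rw [hfilter]; exact hcard⟩

end Existence


theorem stmt_12 (p : ℕ) [hp : Fact p.Prime] (hp5 : 5 ≤ p) :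
    (∃ c ∈ cyclicCode (3 * p) ((X - 1) ^ 4 * (X ^ 2 + X + 1) : (ZMod p)[X]),
      c ≠ 0 ∧ pairWt (3 * p) c = 7) ∧
    (∀ c ∈ cyclicCode (3 * p) ((X - 1) ^ 4 * (X ^ 2 + X + 1) : (ZMod p)[X]),
      c ≠ 0 → 7 ≤ pairWt (3 * p) c) ∧
    7 = 3 * p - (3 * p - 6) + 1 := by
  refine ⟨?_, ?_, by omega⟩
  · obtain ⟨c, h1, h2, h3⟩ := existence hp5
    exact ⟨c, h1, h2, h3⟩
  · intro c hc hc0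
    exact lower_bound hp5 c hc hc0
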